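/- Let T1 and T2 be tournaments with p and q vertices respectively, both even. Then det(T1 → T2) = det(T1) · det(T2), where T1 → T2 is the join obtained by adding an arc from every vertex of T1 to every vertex of T2. -/

import Mathlib

open scoped Classical

/-- A tournament: irreflexive, and between distinct vertices exactly one arc. -/
def IsTournament {V : Type*} (r : V → V → Prop) : Prop :=
  (∀ i, ¬ r i i) ∧ ∀ i j, i ≠ j → (r i j ↔ ¬ r j i)

/-- Skew-adjacency matrix of a relation. -/
noncomputable def skew {V : Type*} (r : V → V → Prop) : Matrix V V ℤ :=
  Matrix.of fun i j => if r i j then 1 else if r j i then -1 else 0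

/-- Determinant of the skew-adjacency matrix. -/
noncomputable def tdet {V : Type*} [Fintype V] [DecidableEq V] (r : V → V → Prop) : ℤ :=
  (skew r).det

/-- Determinant of the subtournament induced by a finite vertex subset. -/
noncomputable def subdet {V : Type*} [Fintype V] [DecidableEq V] (r : V → V → Prop)
    (s : Finset V) : ℤ :=
  ((skew r).submatrix (fun x : {x // x ∈ s} => x.1) (fun x : {x // x ∈ s} => x.1)).det

/-- Switch of `r` with respect to `W`: arcs between `W` and its complement are reversed. -/
def switchRel {V : Type*} (r : V → V → Prop) (W : Set V) : V → V → Prop :=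
  fun i j => if (i ∈ W ↔ j ∈ W) then r i j else r j i

/-- Switching equivalence of two tournaments on the same vertex set. -/
def SwitchEquiv {V : Type*} (r₁ r₂ : V → V → Prop) : Prop :=
  ∃ W : Set V, ∀ i j, r₂ i j ↔ switchRel r₁ W i j

def IsTransitive {V : Type*} (r : V → V → Prop) : Prop :=
  ∀ a b c, r a b → r b c → r a c

def IsTransitiveOn {V : Type*} (r : V → V → Prop) (X : Finset V) : Prop :=
  ∀ a ∈ X, ∀ b ∈ X, ∀ c ∈ X, r a b → r b c → r a c

/-- A 4-set inducing a diamond: a vertex dominating or dominated by a 3-cycle. -/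
def IsDiamond {V : Type*} (r : V → V → Prop) (X : Finset V) : Prop :=
  ∃ a b c d : V, X = {a, b, c, d} ∧ a ≠ b ∧ a ≠ c ∧ a ≠ d ∧ b ≠ c ∧ b ≠ d ∧ c ≠ d ∧
    r b c ∧ r c d ∧ r d b ∧ ((r a b ∧ r a c ∧ r a d) ∨ (r b a ∧ r c a ∧ r d a))

/-- Number of diamonds of a tournament. -/
noncomputable def numDiamonds {V : Type*} [Fintype V] (r : V → V → Prop) : ℕ :=
  Set.ncard {X : Finset V | IsDiamond r X}

/-- The tournament `L_n`: a transitive chain `u_0 → ⋯ → u_{n-2}` together with a last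
vertex alternating along the chain, starting with `u_{n-1} → u_0`. -/
def LRel (n : ℕ) : Fin n → Fin n → Prop := fun i j =>
  (j.val < n - 1 ∧ i.val < j.val) ∨
  (j.val = n - 1 ∧ i.val < n - 1 ∧ i.val % 2 = 1) ∨
  (i.val = n - 1 ∧ j.val < n - 1 ∧ j.val % 2 = 0)

/-- Join of two tournaments: all arcs from the first to the second. -/
def joinRel {A B : Type*} (r : A → A → Prop) (s : B → B → Prop) : A ⊕ B → A ⊕ B → Prop :=
  fun x y => match x, y with
  | .inl a, .inl a' => r a a'
  | .inr b, .inr b' => s b b'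
  | .inl _, .inr _ => True
  | .inr _, .inl _ => False

/-- `T⁺`: add one new vertex dominated by every vertex of `T`. -/
def plusRel {A : Type*} (r : A → A → Prop) : Option A → Option A → Prop :=
  fun x y => match x, y with
  | some a, some b => r a b
  | some _, none => True
  | _, _ => False

/-- Blowup of `r` by the family of tournaments `t`. -/
def blowupG {ι : Type*} [DecidableEq ι] (r : ι → ι → Prop) {κ : ι → Type*}
    (t : ∀ i, κ i → κ i → Prop) : (Σ i, κ i) → (Σ i, κ i) → Prop :=
  fun x y => if h : x.1 = y.1 then t y.1 (h ▸ x.2) y.2 else r x.1 y.1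

/-- Transitive `(a_1,…,a_n)`-blowup of `r`. -/
def blowup {ι : Type*} [DecidableEq ι] (r : ι → ι → Prop) (a : ι → ℕ) :
    (Σ i, Fin (a i)) → (Σ i, Fin (a i)) → Prop :=
  blowupG r (fun _ p q => p < q)


open Matrix in
lemma skew_entry_skew {V : Type*} (r : V → V → Prop)
    (hr : IsTournament r) (i j : V) :
    skew r j i = - skew r i j := by
  by_cases h : i = j
  · subst h; simp [skew, hr.1 i]
  · by_cases hij : r i j
    · have : ¬ r j i := (hr.2 i j h).mp hij
      simp [skew, hij, this]
    · have hji : r j i := by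
        by_contra hji; exact hji ((hr.2 j i (Ne.symm h)).mpr hij)
      simp [skew, hij, hji]

open Matrix in
lemma skew_odd' {V : Type*} [Fintype V] [DecidableEq V] (r : V → V → Prop)
    (hr : IsTournament r) (hV : Even (Fintype.card V)) :
    ¬ (2 : ℤ) ∣ (skew r).det := by
  intro hdvd
  have h2 : ((Int.castRingHom (ZMod 2)) (skew r).det) = 0 := by
    obtain ⟨c, hc⟩ := hdvd
    simp only [hc, _root_.map_mul]
    have : ((Int.castRingHom (ZMod 2)) 2) = 0 := by decide
    rw [this, zero_mul]
  rw [RingHom.map_det] at h2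
  have hmap : (Int.castRingHom (ZMod 2)).mapMatrix (skew r) =
      1 + replicateCol Unit (fun _ : V => (1 : ZMod 2)) * replicateRow Unit (fun _ : V => (1 : ZMod 2)) := by
    ext i j
    have hentry : (1 + replicateCol Unit (fun _ : V => (1 : ZMod 2)) * replicateRow Unit (fun _ : V => (1 : ZMod 2)) : Matrix V V (ZMod 2)) i j
        = (if i = j then (1:ZMod 2) else 0) + 1 := by
      simp [Matrix.add_apply, Matrix.mul_apply, Matrix.one_apply]
    rw [hentry]
    by_cases h : i = j
    · subst h
      simp [skew, hr.1 i]
      decide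
    · by_cases hij : r i j
      · simp [skew, hij, h]
      · have hji : r j i := by
          by_contra hji; exact hji ((hr.2 j i (Ne.symm h)).mpr hij)
        simp [skew, hij, hji, h]
  rw [hmap, Matrix.det_one_add_replicateCol_mul_replicateRow] at h2
  have hd : ((fun _ : V => (1:ZMod 2)) ⬝ᵥ (fun _ => 1)) = (Fintype.card V : ZMod 2) := by
    simp [dotProduct]
  rw [hd] at h2
  have hc0 : (Fintype.card V : ZMod 2) = 0 := by
    obtain ⟨k, hk⟩ := hV
    rw [hk, ← two_mul]
    push_cast
    rw [show (2:ZMod 2) = 0 by decide, zero_mul]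
  rw [hc0] at h2
  simp at h2

/-- Membership in `𝒟_k`: every subtournament has determinant at most `k²`. -/
def memD {V : Type*} [Fintype V] [DecidableEq V] (r : V → V → Prop) (k : ℕ) : Prop :=
  ∀ s : Finset V, subdet r s ≤ (k : ℤ) ^ 2

theorem stmt2 {p q : ℕ} (hp : Even p) (hq : Even q)
    (r : Fin p → Fin p → Prop) (s : Fin q → Fin q → Prop)
    (hr : IsTournament r) (hs : IsTournament s) :
    tdet (joinRel r s) = tdet r * tdet s := by
  classical
  -- the skew matrix of the join is a block matrix
  have hblock : skew (joinRel r s) =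
      Matrix.fromBlocks (skew r) (Matrix.of fun _ _ => (1:ℤ))
        (Matrix.of fun _ _ => (-1:ℤ)) (skew s) := by
    ext i j
    cases i <;> cases j <;> simp [skew, joinRel, Matrix.fromBlocks] <;> congr
  -- move to ℚ
  have hinj : Function.Injective (Int.cast : ℤ → ℚ) := Int.cast_injective
  apply hinj
  push_cast
  unfold tdet
  rw [show ((skew (joinRel r s)).det : ℚ)
      = ((Int.castRingHom ℚ).mapMatrix (skew (joinRel r s))).det by rw [← RingHom.map_det]; simp,
    show ((skew r).det : ℚ) = ((Int.castRingHom ℚ).mapMatrix (skew r)).det by rw [← RingHom.map_det]; simp,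
    show ((skew s).det : ℚ) = ((Int.castRingHom ℚ).mapMatrix (skew s)).det by rw [← RingHom.map_det]; simp]
  set Aq : Matrix (Fin p) (Fin p) ℚ := (Int.castRingHom ℚ).mapMatrix (skew r) with hAq
  set Dq : Matrix (Fin q) (Fin q) ℚ := (Int.castRingHom ℚ).mapMatrix (skew s) with hDq
  have hAqdet : Aq.det = ((skew r).det : ℚ) := (RingHom.map_det _ _).symm
  have hAdet0 : Aq.det ≠ 0 := by
    rw [hAqdet]
    intro h
    have : (skew r).det = 0 := by exact_mod_cast h
    exact skew_odd' r hr (by simpa using hp) (this ▸ dvd_zero 2)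
  haveI : Invertible Aq := Aq.invertibleOfIsUnitDet (isUnit_iff_ne_zero.mpr hAdet0)
  rw [hblock]
  have hmapblock : (Int.castRingHom ℚ).mapMatrix (Matrix.fromBlocks (skew r) (Matrix.of fun _ _ => (1:ℤ))
        (Matrix.of fun _ _ => (-1:ℤ)) (skew s))
      = Matrix.fromBlocks Aq (Matrix.of fun _ _ => (1:ℚ))
        (Matrix.of fun _ _ => (-1:ℚ)) Dq := by
    rw [RingHom.mapMatrix_apply, Matrix.fromBlocks_map]
    congr 1 <;> ext i j <;> simp [hAq, hDq]
  rw [hmapblock, Matrix.det_fromBlocks₁₁]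
  -- Schur complement vanishes
  set N : Matrix (Fin p) (Fin p) ℚ := ⅟ Aq with hN
  have hAskew : ∀ i j, Aq j i = - Aq i j := by
    intro i j
    simp only [hAq, RingHom.mapMatrix_apply, Matrix.map_apply]
    rw [skew_entry_skew r hr i j, map_neg]
  have key : ∑ k, ∑ l, N k l = 0 := by
    set v : Fin p → ℚ := fun k => ∑ l, N k l with hv
    have hones : ∀ k, ∑ l, Aq k l * v l = 1 := by
      intro k
      have h1 : Aq.mulVec (N.mulVec (fun _ => (1:ℚ))) = fun _ => (1:ℚ) := by
        rw [Matrix.mulVec_mulVec, mul_invOf_self]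
        ext k; simp [Matrix.mulVec, dotProduct, Matrix.one_apply]
      have h2 : (N.mulVec (fun _ => (1:ℚ))) = v := by
        ext k; simp [Matrix.mulVec, dotProduct, hv]
      rw [h2] at h1
      have := congrFun h1 k
      simpa [Matrix.mulVec, dotProduct] using this
    have t0 : ∑ k, ∑ l, Aq k l * (v l * v k) = 0 := by
      have hswap : ∑ k, ∑ l, Aq k l * (v l * v k)
          = - ∑ k, ∑ l, Aq k l * (v l * v k) := by
        calc ∑ k, ∑ l, Aq k l * (v l * v k)
            = ∑ k, ∑ l, Aq l k * (v k * v l) := Finset.sum_comm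
          _ = ∑ k, ∑ l, -(Aq k l * (v l * v k)) := by
              refine Finset.sum_congr rfl fun k _ => Finset.sum_congr rfl fun l _ => ?_
              rw [hAskew k l]; ring
          _ = - ∑ k, ∑ l, Aq k l * (v l * v k) := by
              simp [Finset.sum_neg_distrib]
      linarith
    have hc : ∑ k, v k = 0 := by
      have : ∑ k, v k = ∑ k, ∑ l, Aq k l * (v l * v k) := by
        refine Finset.sum_congr rfl fun k _ => ?_
        rw [show ∑ l, Aq k l * (v l * v k) = (∑ l, Aq k l * v l) * v k by
          rw [Finset.sum_mul]; exact Finset.sum_congr rfl fun l _ => by ring]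
        rw [hones k, one_mul]
      rw [this, t0]
    simpa [hv] using hc
  have hC : (Matrix.of fun _ _ => (-1:ℚ) : Matrix (Fin q) (Fin p) ℚ) * N * (Matrix.of fun _ _ => (1:ℚ) : Matrix (Fin p) (Fin q) ℚ) = (0 : Matrix (Fin q) (Fin q) ℚ) := by
    ext i j
    simp only [Matrix.mul_apply, Matrix.of_apply, Matrix.zero_apply, mul_one]
    have step : ∑ l, ∑ k, (-1 : ℚ) * N k l = - ∑ k, ∑ l, N k l := by
      calc ∑ l, ∑ k, (-1 : ℚ) * N k l = ∑ k, ∑ l, (-1 : ℚ) * N k l := Finset.sum_comm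
        _ = - ∑ k, ∑ l, N k l := by simp [Finset.sum_neg_distrib]
    rw [step, key, neg_zero]
  rw [hC, sub_zero]
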